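/- Let L be a 3-dimensional unsolvable Z_p-Lie lattice with a basis (x0,x1,x2) satisfying [x_i,x_{i+1}] = a_{i+2} x_{i+2} (indices mod 3) with a_i ∈ Z_p \ {0}, and set s_i = v_p(a_i). For natural numbers m0, m1, m2, the submodule I = ⟨p^{m0} x0, p^{m1} x1, p^{m2} x2⟩ is an ideal of L if and only if m_i + s_j ≥ m_j for all i, j ∈ {0,1,2}. -/

import Mathlib

/-- For a diagonalized 3-dimensional unsolvable `ℤ_[p]`-Lie lattice with
structure constants `a i` of valuation `s i`, the submodule
`I = ⟨p^{m 0} x 0, p^{m 1} x 1, p^{m 2} x 2⟩` is an ideal of `L` if and only if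
`m i + s j ≥ m j` for all `i j`. -/
theorem stmt2 (p : ℕ) [Fact p.Prime]
    (L : Type*) [LieRing L] [LieAlgebra ℤ_[p] L]
    (hus : ¬ LieAlgebra.IsSolvable L)
    (x : Module.Basis (Fin 3) ℤ_[p] L) (a : Fin 3 → ℤ_[p]) (ha : ∀ i, a i ≠ 0)
    (hx : ∀ i : Fin 3, ⁅x i, x (i + 1)⁆ = a (i + 2) • x (i + 2))
    (s : Fin 3 → ℕ) (hs : ∀ i, (s i : ℤ) = (a i : ℚ_[p]).valuation)
    (m : Fin 3 → ℕ)
    (I : Submodule ℤ_[p] L)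
    (hI : I = Submodule.span ℤ_[p]
      {y | ∃ i : Fin 3, y = (p : ℤ_[p]) ^ (m i) • x i}) :
    (∀ y : L, ∀ z ∈ I, ⁅y, z⁆ ∈ I) ↔ (∀ i j : Fin 3, m i + s j ≥ m j) := by
  -- basic Fin 3 arithmetic facts
  have hf1 : ∀ j : Fin 3, j + 2 + 1 = j := by decide
  have hf2 : ∀ j : Fin 3, j + 2 + 2 = j + 1 := by decide
  have hf3 : ∀ j : Fin 3, j + 1 + 1 = j + 2 := by decide
  have hf4 : ∀ j : Fin 3, j + 1 + 2 = j := by decide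
  have key : ∀ i j : Fin 3, i = j ∨ i = j + 1 ∨ i = j + 2 := by decide
  -- rewritten bracket relations
  have hx1 : ∀ j : Fin 3, ⁅x (j + 1), x (j + 2)⁆ = a j • x j := by
    intro j; have := hx (j + 1); rwa [hf3, hf4] at this
  have hx2 : ∀ j : Fin 3, ⁅x (j + 2), x j⁆ = a (j + 1) • x (j + 1) := by
    intro j; have := hx (j + 2); rwa [hf1, hf2] at this
  -- divisibility ↔ valuation
  have hdvd : ∀ (z : ℤ_[p]), z ≠ 0 → ∀ n : ℕ, ((p : ℤ_[p]) ^ n ∣ z ↔ (n : ℤ) ≤ z.valuation) := by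
    intro z hz n
    rw [← Ideal.mem_span_singleton, PadicInt.mem_span_pow_iff_le_valuation z hz n, Nat.cast_le]
  -- p^{s k} divides a k
  have hsa : ∀ k, (p : ℤ_[p]) ^ (s k) ∣ a k := by
    intro k
    have hnat : (a k).valuation = s k := by
      have := hs k; rw [PadicInt.valuation_coe] at this; exact_mod_cast this.symm
    conv_rhs => rw [PadicInt.unitCoeff_spec (ha k), hnat]
    exact Dvd.intro_left _ rfl
  -- divisibility from the numerical condition
  have hdvd2 : ∀ (j k : Fin 3), m j + s k ≥ m k →
      (p : ℤ_[p]) ^ (m k) ∣ (p : ℤ_[p]) ^ (m j) * a k := by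
    intro j k hjk
    refine dvd_trans (pow_dvd_pow _ hjk) ?_
    rw [pow_add]
    exact mul_dvd_mul_left _ (hsa k)
  -- membership criterion: sufficient
  have hmem : ∀ (k : Fin 3) (c : ℤ_[p]), (p : ℤ_[p]) ^ (m k) ∣ c → c • x k ∈ I := by
    rintro k c ⟨d, rfl⟩
    rw [hI, mul_comm, mul_smul]
    exact Submodule.smul_mem _ d (Submodule.subset_span ⟨k, rfl⟩)
  -- membership criterion: necessary (coordinates divisible)
  have hset : {y : L | ∃ i : Fin 3, y = (p : ℤ_[p]) ^ (m i) • x i}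
      = Set.range (fun i : Fin 3 => (p : ℤ_[p]) ^ (m i) • x i) := by
    ext y; constructor
    · rintro ⟨i, rfl⟩; exact ⟨i, rfl⟩
    · rintro ⟨i, rfl⟩; exact ⟨i, rfl⟩
  have hrepr : ∀ y ∈ I, ∀ k : Fin 3, (p : ℤ_[p]) ^ (m k) ∣ x.repr y k := by
    intro y hy k
    rw [hI, hset, Submodule.mem_span_range_iff_exists_fun] at hy
    obtain ⟨c, hc⟩ := hy
    have hy' : y = ∑ i, (c i * (p : ℤ_[p]) ^ (m i)) • x i := by
      rw [← hc]
      exact Finset.sum_congr rfl (fun i _ => smul_smul _ _ _)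
    rw [hy']
    have := x.repr_sum_self (fun i => c i * (p : ℤ_[p]) ^ (m i))
    rw [show (x.repr (∑ i, (c i * (p : ℤ_[p]) ^ (m i)) • x i)) k
        = c k * (p : ℤ_[p]) ^ (m k) from by rw [this]]
    exact Dvd.intro_left _ rfl
  have hgen : ∀ k : Fin 3, (p : ℤ_[p]) ^ (m k) • x k ∈ I :=
    fun k => hI ▸ Submodule.subset_span ⟨k, rfl⟩
  constructor
  · -- ideal → inequalities
    intro hid
    -- family A' : m (j+2) + s j ≥ m j
    have A' : ∀ j : Fin 3, m (j + 2) + s j ≥ m j := by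
      intro j
      have hb : ⁅x (j + 1), (p : ℤ_[p]) ^ (m (j + 2)) • x (j + 2)⁆ ∈ I :=
        hid _ _ (hgen (j + 2))
      rw [lie_smul, hx1 j, smul_smul] at hb
      have hd := hrepr _ hb j
      rw [show (x.repr (((p : ℤ_[p]) ^ (m (j + 2)) * a j) • x j)) j
          = (p : ℤ_[p]) ^ (m (j + 2)) * a j from by simp] at hd
      have hne : (p : ℤ_[p]) ^ (m (j + 2)) * a j ≠ 0 :=
        mul_ne_zero (pow_ne_zero _ (NeZero.ne _)) (ha j)
      rw [hdvd _ hne, PadicInt.valuation_p_pow_mul _ _ (ha j), Nat.cast_add, ← PadicInt.valuation_coe, ← hs j] at hd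
      exact_mod_cast hd
    -- family B' : m (j+1) + s j ≥ m j
    have B' : ∀ j : Fin 3, m (j + 1) + s j ≥ m j := by
      intro j
      have hb : ⁅x (j + 2), (p : ℤ_[p]) ^ (m (j + 1)) • x (j + 1)⁆ ∈ I :=
        hid _ _ (hgen (j + 1))
      have he : ⁅x (j + 2), x (j + 1)⁆ = -(a j • x j) := by
        rw [← lie_skew, hx1 j]
      rw [lie_smul, he, smul_neg, smul_smul, ← neg_smul] at hb
      have hd := hrepr _ hb j
      rw [show (x.repr ((-((p : ℤ_[p]) ^ (m (j + 1)) * a j)) • x j)) j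
          = -((p : ℤ_[p]) ^ (m (j + 1)) * a j) from by simp, dvd_neg] at hd
      have hne : (p : ℤ_[p]) ^ (m (j + 1)) * a j ≠ 0 :=
        mul_ne_zero (pow_ne_zero _ (NeZero.ne _)) (ha j)
      rw [hdvd _ hne, PadicInt.valuation_p_pow_mul _ _ (ha j), Nat.cast_add, ← PadicInt.valuation_coe, ← hs j] at hd
      exact_mod_cast hd
    intro i j
    rcases key i j with rfl | rfl | rfl
    · exact Nat.le_add_right _ _
    · exact B' j
    · exact A' j
  · -- inequalities → ideal
    intro hcond y z hz
    -- brackets of basis vectors with generators lie in I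
    have hbrack : ∀ i k : Fin 3, ⁅x i, (p : ℤ_[p]) ^ (m k) • x k⁆ ∈ I := by
      intro i k
      rcases key k i with rfl | rfl | rfl
      · rw [lie_smul, lie_self, smul_zero]; exact zero_mem _
      · rw [lie_smul, hx i, smul_smul]
        exact hmem _ _ (hdvd2 (i + 1) (i + 2) (hcond (i + 1) (i + 2)))
      · have he : ⁅x i, x (i + 2)⁆ = -(a (i + 1) • x (i + 1)) := by
          rw [← lie_skew, hx2 i]
        rw [lie_smul, he, smul_neg, smul_smul, ← neg_smul]
        exact hmem _ _ ((dvd_neg).mpr (hdvd2 (i + 2) (i + 1) (hcond (i + 2) (i + 1))))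
    rw [hI] at hz
    refine Submodule.span_induction ?_ ?_ ?_ ?_ hz
    · rintro g ⟨k, rfl⟩
      have hy : y ∈ (⊤ : Submodule ℤ_[p] L) := trivial
      rw [← x.span_eq] at hy
      refine Submodule.span_induction ?_ ?_ ?_ ?_ hy
      · rintro w ⟨i, rfl⟩; exact hbrack i k
      · rw [zero_lie]; exact zero_mem _
      · intro u v _ _ hu hv; rw [add_lie]; exact add_mem hu hv
      · intro c u _ hu; rw [smul_lie]; exact Submodule.smul_mem _ _ hu
    · rw [lie_zero]; exact zero_mem _
    · intro u v _ _ hu hv; rw [lie_add]; exact add_mem hu hv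
    · intro c u _ hu; rw [lie_smul]; exact Submodule.smul_mem _ _ hu
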